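/- arXiv:2509.19118 — 2 statements merged into one kernel-verified Lean document; each statement's English description precedes it below -/
import Mathlib

section
/- Classification of marked B-polygons: let \alpha \subset Z^2 be a 2-dimensional marked B-polygon (every triangle with vertices in \alpha is a pyramid of lattice height 1 over a marked side of the convex hull of \alpha). Then, up to a lattice-affine transformation, \alpha is one of: (1) a B_1-marked polygon: a pyramid of lattice height 1 with base on a marked side; (2) a B_2-marked polygon: \alpha is contained in a strip {0 \le x_1 \le 1} and both sides of the convex hull on the boundary lines x_1 = 0 and x_1 = 1 are marked; (3) a flat border marked polygon: \alpha = {(0,0), (a,0), (0,1), (1,1)} with a > 1, and all sides of the convex hull except the segment [(0,1),(1,1)] are marked. -/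
/-- The value of the integral affine function with linear part `u` at `p`. -/
def lval (u p : ℤ × ℤ) : ℤ := u.1 * p.1 + u.2 * p.2

/-- `u` is primitive and the line `{lval u · = c}` supports `α` from below. -/
def IsSupp (α : Finset (ℤ × ℤ)) (u : ℤ × ℤ) (c : ℤ) : Prop :=
  IsCoprime u.1 u.2 ∧ ∀ p ∈ α, c ≤ lval u p

/-- `s` is a side (edge) of the convex hull of `α`: the set of points of `α` lying on a
supporting line, with at least two points. -/
def IsSide (α : Finset (ℤ × ℤ)) (s : Finset (ℤ × ℤ)) : Prop :=
  ∃ u c, IsSupp α u c ∧ s = α.filter (fun p => lval u p = c) ∧ 2 ≤ s.card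

/-- Three non-collinear points of `ℤ²`. -/
def NotCollinear (p q r : ℤ × ℤ) : Prop :=
  (q.1 - p.1) * (r.2 - p.2) ≠ (q.2 - p.2) * (r.1 - p.1)

/-- A finite subset of `ℤ²` is 2-dimensional: it contains three non-collinear points. -/
def TwoDim (S : Finset (ℤ × ℤ)) : Prop :=
  ∃ p ∈ S, ∃ q ∈ S, ∃ r ∈ S, NotCollinear p q r

/-- The triangle `p q r` is a marked B-triangle for `(α, M)`: there is a marked side
`s ∈ M` (with supporting data `(u, c)`) such that the triangle is a pyramid of lattice
height 1 whose base segment lies on the line of `s`. -/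
def IsMarkedBTriangle (α : Finset (ℤ × ℤ)) (M : Finset (Finset (ℤ × ℤ)))
    (p q r : ℤ × ℤ) : Prop :=
  ∃ s ∈ M, ∃ u c, IsSupp α u c ∧ s = α.filter (fun x => lval u x = c) ∧
    ((lval u p = c ∧ lval u q = c ∧ lval u r = c + 1) ∨
     (lval u p = c ∧ lval u r = c ∧ lval u q = c + 1) ∨
     (lval u q = c ∧ lval u r = c ∧ lval u p = c + 1))

/-- A marked B-polygon: a finite 2-dimensional subset `α ⊆ ℤ²` with a set `M` of marked
sides of its convex hull, such that every 2-dimensional triangle with vertices in `α` is a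
marked B-triangle. -/
def IsMarkedBPolygon (α : Finset (ℤ × ℤ)) (M : Finset (Finset (ℤ × ℤ))) : Prop :=
  TwoDim α ∧ (∀ s ∈ M, IsSide α s) ∧
    ∀ p ∈ α, ∀ q ∈ α, ∀ r ∈ α, NotCollinear p q r → IsMarkedBTriangle α M p q r

/-- B₁-marked polygon: a pyramid of lattice height 1 with base on a marked side. -/
def B1Shape (α : Finset (ℤ × ℤ)) (M : Finset (Finset (ℤ × ℤ))) : Prop :=
  ∃ s ∈ M, ∃ u c, IsSupp α u c ∧ s = α.filter (fun x => lval u x = c) ∧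
    ∃ apex ∈ α, lval u apex = c + 1 ∧ ∀ p ∈ α, p ∉ s → p = apex

/-- B₂-marked polygon: `α` is contained in a lattice strip of width 1 and both sides of the
convex hull on the boundary of the strip are marked. -/
def B2Shape (α : Finset (ℤ × ℤ)) (M : Finset (Finset (ℤ × ℤ))) : Prop :=
  ∃ u c, IsSupp α u c ∧ IsSupp α (-u) (-(c + 1)) ∧
    α.filter (fun x => lval u x = c) ∈ M ∧
    α.filter (fun x => lval u x = c + 1) ∈ M ∧
    ∀ p ∈ α, lval u p = c ∨ lval u p = c + 1

/-- Flat border marked polygon: `α = {(0,0), (a,0), (0,1), (1,1)}` with `a > 1` and all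
sides of the convex hull except `[(0,1),(1,1)]` are marked. -/
def FlatShape (α : Finset (ℤ × ℤ)) (M : Finset (Finset (ℤ × ℤ))) : Prop :=
  ∃ a : ℤ, 1 < a ∧ α = {(0, 0), (a, 0), (0, 1), (1, 1)} ∧
    M = ({{(0, 0), (a, 0)}, {(0, 0), (0, 1)}, {(a, 0), (1, 1)}} : Finset (Finset (ℤ × ℤ)))

-- helpers
lemma lval_neg (u p : ℤ × ℤ) : lval (-u) p = -lval u p := by
  simp only [lval, Prod.fst_neg, Prod.snd_neg]; ring

lemma coprime_of_comb {v1 v2 a b c d : ℤ} (h : IsCoprime (a*v1+b*v2) (c*v1+d*v2)) :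
    IsCoprime v1 v2 := by
  obtain ⟨x, y, hxy⟩ := h
  exact ⟨x*a + y*c, x*b + y*d, by linear_combination hxy⟩

lemma param {u : ℤ × ℤ} (hu : IsCoprime u.1 u.2) (d : ℤ × ℤ) (h : lval u d = 0) :
    ∃ k : ℤ, d.1 = -k * u.2 ∧ d.2 = k * u.1 := by
  obtain ⟨a, b, hab⟩ := hu
  simp only [lval] at h
  refine ⟨a * d.2 - b * d.1, ?_, ?_⟩
  · linear_combination -d.1 * hab + a * h
  · linear_combination -d.2 * hab + b * h

lemma perp {u u' : ℤ × ℤ} (hu : IsCoprime u.1 u.2) (hu' : IsCoprime u'.1 u'.2)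
    (d : ℤ × ℤ) (hd : d ≠ 0) (h1 : lval u d = 0) (h2 : lval u' d = 0) :
    u' = u ∨ u' = -u := by
  obtain ⟨k, hk1, hk2⟩ := param hu d h1
  obtain ⟨k', hk1', hk2'⟩ := param hu' d h2
  have hk0 : k ≠ 0 := by
    rintro rfl
    exact hd (Prod.ext (by simpa using hk1) (by simpa using hk2))
  have hk0' : k' ≠ 0 := by
    rintro rfl
    exact hd (Prod.ext (by simpa using hk1') (by simpa using hk2'))
  have f1 : k * u.1 = k' * u'.1 := by linear_combination hk2' - hk2
  have f2 : k * u.2 = k' * u'.2 := by linear_combination hk1 - hk1'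
  obtain ⟨a, b, hab⟩ := hu
  obtain ⟨a', b', hab'⟩ := hu'
  have e1 : k = k' * (a * u'.1 + b * u'.2) := by
    linear_combination (-k) * hab + a * f1 + b * f2
  have e2 : k' = k * (a' * u.1 + b' * u.2) := by
    linear_combination (-k') * hab' - a' * f1 - b' * f2
  set m := a * u'.1 + b * u'.2 with hm
  set n := a' * u.1 + b' * u.2 with hn
  have hmn : m * n = 1 := by
    have : k * (m * n) = k * 1 := by linear_combination -e1 - m * e2
    exact mul_left_cancel₀ hk0 this
  have hm1 : m = 1 ∨ m = -1 := Int.isUnit_iff.mp (IsUnit.of_mul_eq_one (a := m) n hmn)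
  have g1 : u'.1 = m * u.1 := by
    have : k' * u'.1 = k' * (m * u.1) := by linear_combination -f1 + u.1 * e1
    exact (mul_left_cancel₀ hk0' this)
  have g2 : u'.2 = m * u.2 := by
    have : k' * u'.2 = k' * (m * u.2) := by linear_combination -f2 + u.2 * e1
    exact (mul_left_cancel₀ hk0' this)
  rcases hm1 with hh | hh <;> rw [hh] at g1 g2
  · left; exact Prod.ext (by simpa using g1) (by simpa using g2)
  · right
    refine Prod.ext ?_ ?_ <;>
      simp only [Prod.fst_neg, Prod.snd_neg, g1, g2] <;> ring

lemma detz {u x y : ℤ × ℤ} (hx : x ≠ 0) (hdet : x.1 * y.2 = x.2 * y.1)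
    (hux : lval u x = 0) : lval u y = 0 := by
  simp only [lval] at hux ⊢
  have h1 : x.1 * (u.1 * y.1 + u.2 * y.2) = 0 := by
    linear_combination u.2 * hdet + y.1 * hux
  have h2 : x.2 * (u.1 * y.1 + u.2 * y.2) = 0 := by
    linear_combination (-u.1) * hdet + y.2 * hux
  have : x.1 ≠ 0 ∨ x.2 ≠ 0 := by
    by_contra hc
    push_neg at hc
    exact hx (Prod.ext hc.1 hc.2)
  rcases this with h | h
  · exact (mul_eq_zero.mp h1).resolve_left h
  · exact (mul_eq_zero.mp h2).resolve_left h

/-- two points on a support line plus a point off it are not collinear -/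
lemma ncl {u : ℤ × ℤ} {c : ℤ} {P Q R : ℤ × ℤ} (hne : P ≠ Q)
    (hP : lval u P = c) (hQ : lval u Q = c) (hR : lval u R ≠ c) :
    NotCollinear P Q R := by
  intro hcol
  apply hR
  have hx : ((Q.1 - P.1, Q.2 - P.2) : ℤ × ℤ) ≠ 0 := by
    rintro hz
    rw [Prod.ext_iff] at hz
    simp only [Prod.fst_zero, Prod.snd_zero] at hz
    exact hne (Prod.ext (by linarith [hz.1]) (by linarith [hz.2]))
  have hux : lval u (Q.1 - P.1, Q.2 - P.2) = 0 := by
    simp only [lval]; simp only [lval] at hP hQ; linarith [hP, hQ]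
  have := detz (u := u) (y := (R.1 - P.1, R.2 - P.2)) hx (by simpa using hcol) hux
  simp only [lval] at this hP ⊢
  linarith [this, hP]

lemma coll {u : ℤ × ℤ} {c : ℤ} (hu : IsCoprime u.1 u.2) {P Q R : ℤ × ℤ}
    (hP : lval u P = c) (hQ : lval u Q = c) (hR : lval u R = c) :
    ¬ NotCollinear P Q R := by
  intro hnc
  apply hnc
  simp only [lval] at hP hQ hR
  have hu0 : u.1 ≠ 0 ∨ u.2 ≠ 0 := by
    by_contra hc
    push_neg at hc
    rw [hc.1, hc.2] at hu
    exact not_isCoprime_zero_zero hu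
  have hx : u.1 * (Q.1 - P.1) + u.2 * (Q.2 - P.2) = 0 := by linarith
  have hy : u.1 * (R.1 - P.1) + u.2 * (R.2 - P.2) = 0 := by linarith
  have h1 : u.1 * ((Q.1-P.1) * (R.2-P.2) - (Q.2-P.2) * (R.1-P.1)) = 0 := by
    linear_combination (R.2 - P.2) * hx - (Q.2 - P.2) * hy
  have h2 : u.2 * ((Q.1-P.1) * (R.2-P.2) - (Q.2-P.2) * (R.1-P.1)) = 0 := by
    linear_combination (Q.1 - P.1) * hy - (R.1 - P.1) * hx
  rcases hu0 with h | h
  · have := (mul_eq_zero.mp h1).resolve_left h; linarith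
  · have := (mul_eq_zero.mp h2).resolve_left h; linarith

-- ### affine unimodular maps
def Tmap (A B C D E F : ℤ) (p : ℤ × ℤ) : ℤ × ℤ :=
  (A * p.1 + B * p.2 + E, C * p.1 + D * p.2 + F)

/-- transformed normal vector -/
def uT (A B C D : ℤ) (u : ℤ × ℤ) : ℤ × ℤ := (D * u.1 - C * u.2, A * u.2 - B * u.1)

lemma Tmap_inj {A B C D E F : ℤ} (h : A * D - B * C = 1) :
    Function.Injective (Tmap A B C D E F) := by
  intro p q hpq
  rw [Prod.ext_iff] at hpq
  simp only [Tmap] at hpq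
  obtain ⟨e1, e2⟩ := hpq
  have h1 : p.1 = q.1 := by linear_combination D * e1 - B * e2 - (p.1 - q.1) * h
  have h2 : p.2 = q.2 := by linear_combination A * e2 - C * e1 - (p.2 - q.2) * h
  exact Prod.ext h1 h2

lemma filter_image (f : (ℤ × ℤ) → (ℤ × ℤ)) (s : Finset (ℤ × ℤ)) (p : (ℤ × ℤ) → Prop)
    [DecidablePred p] : (s.image f).filter p = (s.filter (fun a => p (f a))).image f := by
  ext z
  simp only [Finset.mem_filter, Finset.mem_image]
  constructor
  · rintro ⟨⟨a, ha, rfl⟩, hp⟩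
    exact ⟨a, ⟨ha, hp⟩, rfl⟩
  · rintro ⟨a, ⟨ha, hp⟩, rfl⟩
    exact ⟨⟨a, ha, rfl⟩, hp⟩

lemma lval_Tmap {A B C D E F : ℤ} (h : A * D - B * C = 1) (u p : ℤ × ℤ) :
    lval (uT A B C D u) (Tmap A B C D E F p) = lval u p + lval (uT A B C D u) (E, F) := by
  simp only [lval, Tmap, uT]
  linear_combination (p.1 * u.1 + p.2 * u.2) * h

lemma uT_coprime {A B C D : ℤ} {u : ℤ × ℤ} (h : A * D - B * C = 1)
    (hu : IsCoprime u.1 u.2) : IsCoprime (uT A B C D u).1 (uT A B C D u).2 := by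
  have e1 : A * (uT A B C D u).1 + C * (uT A B C D u).2 = u.1 := by
    simp only [uT]; linear_combination u.1 * h
  have e2 : B * (uT A B C D u).1 + D * (uT A B C D u).2 = u.2 := by
    simp only [uT]; linear_combination u.2 * h
  rw [← e1, ← e2] at hu
  exact coprime_of_comb hu

lemma supp_Tmap {A B C D E F : ℤ} (h : A * D - B * C = 1) {α : Finset (ℤ × ℤ)}
    {u : ℤ × ℤ} {c : ℤ} (hs : IsSupp α u c) :
    IsSupp (α.image (Tmap A B C D E F)) (uT A B C D u)
      (c + lval (uT A B C D u) (E, F)) := by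
  refine ⟨uT_coprime h hs.1, ?_⟩
  intro q hq
  obtain ⟨p, hp, rfl⟩ := Finset.mem_image.mp hq
  rw [lval_Tmap h]
  have := hs.2 p hp
  omega

lemma filter_Tmap {A B C D E F : ℤ} (h : A * D - B * C = 1) (α : Finset (ℤ × ℤ))
    (u : ℤ × ℤ) (c : ℤ) :
    (α.image (Tmap A B C D E F)).filter
        (fun x => lval (uT A B C D u) x = c + lval (uT A B C D u) (E, F)) =
      (α.filter (fun x => lval u x = c)).image (Tmap A B C D E F) := by
  rw [filter_image]
  apply congrArg
  apply Finset.filter_congr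
  intro p _
  rw [lval_Tmap h]
  constructor <;> intro hh <;> omega

lemma detT {A B C D E F : ℤ} (p q r : ℤ × ℤ) :
    ((Tmap A B C D E F q).1 - (Tmap A B C D E F p).1) *
        ((Tmap A B C D E F r).2 - (Tmap A B C D E F p).2) -
      ((Tmap A B C D E F q).2 - (Tmap A B C D E F p).2) *
        ((Tmap A B C D E F r).1 - (Tmap A B C D E F p).1) =
      (A * D - B * C) * ((q.1 - p.1) * (r.2 - p.2) - (q.2 - p.2) * (r.1 - p.1)) := by
  simp only [Tmap]; ring

lemma nc_Tmap {A B C D E F : ℤ} (h : A * D - B * C = 1) (p q r : ℤ × ℤ) :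
    NotCollinear p q r ↔
      NotCollinear (Tmap A B C D E F p) (Tmap A B C D E F q) (Tmap A B C D E F r) := by
  have hd := detT (A := A) (B := B) (C := C) (D := D) (E := E) (F := F) p q r
  rw [h, one_mul] at hd
  simp only [NotCollinear]
  constructor
  · intro hnc h'
    exact hnc (by linarith)
  · intro hnc h'
    exact hnc (by linarith)

lemma transport {A B C D E F : ℤ} (h : A * D - B * C = 1) {α : Finset (ℤ × ℤ)}
    {M : Finset (Finset (ℤ × ℤ))} (hbp : IsMarkedBPolygon α M) :
    IsMarkedBPolygon (α.image (Tmap A B C D E F))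
      (M.image (Finset.image (Tmap A B C D E F))) := by
  obtain ⟨⟨p, hp, q, hq, r, hr, hnc⟩, hsides, htri⟩ := hbp
  refine ⟨⟨_, Finset.mem_image_of_mem _ hp, _, Finset.mem_image_of_mem _ hq, _,
      Finset.mem_image_of_mem _ hr, (nc_Tmap h p q r).mp hnc⟩, ?_, ?_⟩
  · intro s' hs'
    obtain ⟨s, hs, rfl⟩ := Finset.mem_image.mp hs'
    obtain ⟨u, c, hsupp, hfil, hcard⟩ := hsides s hs
    refine ⟨uT A B C D u, c + lval (uT A B C D u) (E, F), supp_Tmap h hsupp, ?_, ?_⟩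
    · rw [filter_Tmap h, ← hfil]
    · rwa [Finset.card_image_of_injective _ (Tmap_inj h)]
  · intro p' hp' q' hq' r' hr' hnc'
    obtain ⟨p, hp, rfl⟩ := Finset.mem_image.mp hp'
    obtain ⟨q, hq, rfl⟩ := Finset.mem_image.mp hq'
    obtain ⟨r, hr, rfl⟩ := Finset.mem_image.mp hr'
    obtain ⟨s, hsM, u, c, hsupp, hfil, hpat⟩ :=
      htri p hp q hq r hr ((nc_Tmap h p q r).mpr hnc')
    refine ⟨s.image (Tmap A B C D E F), Finset.mem_image_of_mem _ hsM,
      uT A B C D u, c + lval (uT A B C D u) (E, F), supp_Tmap h hsupp, ?_, ?_⟩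
    · rw [filter_Tmap h, ← hfil]
    · simp only [lval_Tmap h]
      rcases hpat with ⟨h1, h2, h3⟩ | ⟨h1, h2, h3⟩ | ⟨h1, h2, h3⟩
      · exact Or.inl ⟨by omega, by omega, by omega⟩
      · exact Or.inr (Or.inl ⟨by omega, by omega, by omega⟩)
      · exact Or.inr (Or.inr ⟨by omega, by omega, by omega⟩)

-- ### adjacency on marked sides that have a far point
lemma adj {α : Finset (ℤ × ℤ)} {M : Finset (Finset (ℤ × ℤ))} (h : IsMarkedBPolygon α M)
    {s : Finset (ℤ × ℤ)} {u : ℤ × ℤ} {c : ℤ} (hsM : s ∈ M) (hsupp : IsSupp α u c)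
    (hfil : s = α.filter (fun p => lval u p = c)) {r : ℤ × ℤ} (hr : r ∈ α)
    (hr2 : c + 2 ≤ lval u r) {P Q : ℤ × ℤ} (hP : P ∈ s) (hQ : Q ∈ s) (hne : P ≠ Q) :
    (Q.1 - P.1 = -u.2 ∧ Q.2 - P.2 = u.1) ∨ (Q.1 - P.1 = u.2 ∧ Q.2 - P.2 = -u.1) := by
  rw [hfil, Finset.mem_filter] at hP hQ
  obtain ⟨hPα, hPc⟩ := hP
  obtain ⟨hQα, hQc⟩ := hQ
  have hd0 : ((Q.1 - P.1, Q.2 - P.2) : ℤ × ℤ) ≠ 0 := by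
    intro hz
    rw [Prod.ext_iff] at hz
    simp only [Prod.fst_zero, Prod.snd_zero] at hz
    exact hne (Prod.ext (by linarith [hz.1]) (by linarith [hz.2]))
  have hub : lval u (Q.1 - P.1, Q.2 - P.2) = 0 := by
    simp only [lval] at hPc hQc ⊢; linear_combination hQc - hPc
  obtain ⟨k, hk1, hk2⟩ := param hsupp.1 _ hub
  simp only at hk1 hk2
  have hnc : NotCollinear P Q r := ncl hne hPc hQc (by omega)
  obtain ⟨s1, hs1M, u', c', hsupp', hfil', hpat⟩ := h.2.2 P hPα Q hQα r hr hnc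
  rcases hpat with ⟨h1, h2, h3⟩ | ⟨h1, h2, h3⟩ | ⟨h1, h2, h3⟩
  · -- P, Q on the marked line: impossible
    have hub' : lval u' (Q.1 - P.1, Q.2 - P.2) = 0 := by
      simp only [lval] at h1 h2 ⊢; linear_combination h2 - h1
    exfalso
    rcases perp hsupp.1 hsupp'.1 _ hd0 hub hub' with rfl | rfl
    · have : c' = c := by omega
      omega
    · rw [lval_neg] at h1 h3
      have hsppr := hsupp.2 r hr
      omega
  · -- P, r on the marked line, Q one above
    have hE : u'.1 * (Q.1 - P.1) + u'.2 * (Q.2 - P.2) = 1 := by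
      simp only [lval] at h1 h3; linear_combination h3 - h1
    have hk : k * (u.1 * u'.2 - u.2 * u'.1) = 1 := by
      linear_combination hE - u'.1 * hk1 - u'.2 * hk2
    rcases Int.isUnit_iff.mp (IsUnit.of_mul_eq_one _ hk) with rfl | rfl
    · left; constructor <;> linarith [hk1, hk2]
    · right; constructor <;> linarith [hk1, hk2]
  · -- Q, r on the marked line, P one above
    have hE : u'.1 * (Q.1 - P.1) + u'.2 * (Q.2 - P.2) = -1 := by
      simp only [lval] at h1 h3; linear_combination h1 - h3
    have hk : (-k) * (u.1 * u'.2 - u.2 * u'.1) = 1 := by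
      linear_combination -hE + u'.1 * hk1 + u'.2 * hk2
    rcases Int.isUnit_iff.mp (IsUnit.of_mul_eq_one _ hk) with hk' | hk'
    · have : k = -1 := by omega
      subst this
      right; constructor <;> linarith [hk1, hk2]
    · have : k = 1 := by omega
      subst this
      left; constructor <;> linarith [hk1, hk2]

-- ### if no marked side bounds a width-1 strip containing α, contradiction
lemma no_strip {α : Finset (ℤ × ℤ)} {M : Finset (Finset (ℤ × ℤ))}
    (h : IsMarkedBPolygon α M)
    (hns : ∀ s ∈ M, ∀ u c, IsSupp α u c → s = α.filter (fun p => lval u p = c) →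
      ∃ r ∈ α, c + 2 ≤ lval u r) : False := by
  obtain ⟨p0, hp0, q0, hq0, r0, hr0, hnc0⟩ := h.1
  obtain ⟨s0, hs0M, u, c, hsupp, hfil, _⟩ := h.2.2 p0 hp0 q0 hq0 r0 hr0 hnc0
  obtain ⟨r, hr, hr2⟩ := hns s0 hs0M u c hsupp hfil
  obtain ⟨u0, c0, _, _, hcard⟩ := h.2.1 s0 hs0M
  obtain ⟨P, hP, Q, hQ, hne⟩ := (Finset.one_lt_card (s := s0)).mp (by omega)
  have hPQ := adj h hs0M hsupp hfil hr hr2 hP hQ hne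
  rw [hfil, Finset.mem_filter] at hP hQ
  obtain ⟨hPα, hPc⟩ := hP
  obtain ⟨hQα, hQc⟩ := hQ
  have hd0 : ((Q.1 - P.1, Q.2 - P.2) : ℤ × ℤ) ≠ 0 := by
    intro hz
    rw [Prod.ext_iff] at hz
    simp only [Prod.fst_zero, Prod.snd_zero] at hz
    exact hne (Prod.ext (by linarith [hz.1]) (by linarith [hz.2]))
  have hub : lval u (Q.1 - P.1, Q.2 - P.2) = 0 := by
    simp only [lval] at hPc hQc ⊢; linear_combination hQc - hPc
  have hnc : NotCollinear P Q r := ncl hne hPc hQc (by omega)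
  obtain ⟨s1, hs1M, u', c', hsupp', hfil', hpat⟩ := h.2.2 P hPα Q hQα r hr hnc
  rcases hpat with ⟨h1, h2, h3⟩ | ⟨h1, h2, h3⟩ | ⟨h1, h2, h3⟩
  · have hub' : lval u' (Q.1 - P.1, Q.2 - P.2) = 0 := by
      simp only [lval] at h1 h2 ⊢; linear_combination h2 - h1
    rcases perp hsupp.1 hsupp'.1 _ hd0 hub hub' with rfl | rfl
    · omega
    · rw [lval_neg] at h1 h3
      have hsppr := hsupp.2 r hr
      omega
  · -- P and r lie on side s1
    have hE : u'.1 * (Q.1 - P.1) + u'.2 * (Q.2 - P.2) = 1 := by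
      simp only [lval] at h1 h3; linear_combination h3 - h1
    have hPs1 : P ∈ s1 := by rw [hfil', Finset.mem_filter]; exact ⟨hPα, h1⟩
    have hrs1 : r ∈ s1 := by rw [hfil', Finset.mem_filter]; exact ⟨hr, h2⟩
    have hPr : P ≠ r := by
      intro hPr; rw [hPr] at hPc; omega
    obtain ⟨r1, hr1, hr12⟩ := hns s1 hs1M u' c' hsupp' hfil'
    have hadj := adj h hs1M hsupp' hfil' hr1 hr12 hPs1 hrs1 hPr
    have hX : (u.1 * u'.2 - u.2 * u'.1 = 1) ∨ (u.1 * u'.2 - u.2 * u'.1 = -1) := by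
      rcases hPQ with ⟨e1, e2⟩ | ⟨e1, e2⟩
      · left; linear_combination hE - u'.1 * e1 - u'.2 * e2
      · right; linear_combination -hE + u'.1 * e1 + u'.2 * e2
    rcases hadj with ⟨e1, e2⟩ | ⟨e1, e2⟩ <;> rcases hX with hX | hX
    · have : lval u r = c - 1 := by
        simp only [lval] at hPc ⊢
        linear_combination hPc + u.1 * e1 + u.2 * e2 - hX
      omega
    · have : lval u r = c + 1 := by
        simp only [lval] at hPc ⊢
        linear_combination hPc + u.1 * e1 + u.2 * e2 - hX
      omega
    · have : lval u r = c + 1 := by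
        simp only [lval] at hPc ⊢
        linear_combination hPc + u.1 * e1 + u.2 * e2 + hX
      omega
    · have : lval u r = c - 1 := by
        simp only [lval] at hPc ⊢
        linear_combination hPc + u.1 * e1 + u.2 * e2 + hX
      omega
  · -- Q and r lie on side s1
    have hE : u'.1 * (Q.1 - P.1) + u'.2 * (Q.2 - P.2) = -1 := by
      simp only [lval] at h1 h3; linear_combination h1 - h3
    have hQs1 : Q ∈ s1 := by rw [hfil', Finset.mem_filter]; exact ⟨hQα, h1⟩
    have hrs1 : r ∈ s1 := by rw [hfil', Finset.mem_filter]; exact ⟨hr, h2⟩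
    have hQr : Q ≠ r := by
      intro hQr; rw [hQr] at hQc; omega
    obtain ⟨r1, hr1, hr12⟩ := hns s1 hs1M u' c' hsupp' hfil'
    have hadj := adj h hs1M hsupp' hfil' hr1 hr12 hQs1 hrs1 hQr
    have hX : (u.1 * u'.2 - u.2 * u'.1 = 1) ∨ (u.1 * u'.2 - u.2 * u'.1 = -1) := by
      rcases hPQ with ⟨e1, e2⟩ | ⟨e1, e2⟩
      · right; linear_combination hE - u'.1 * e1 - u'.2 * e2
      · left; linear_combination -hE + u'.1 * e1 + u'.2 * e2
    rcases hadj with ⟨e1, e2⟩ | ⟨e1, e2⟩ <;> rcases hX with hX | hX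
    · have : lval u r = c - 1 := by
        simp only [lval] at hQc ⊢
        linear_combination hQc + u.1 * e1 + u.2 * e2 - hX
      omega
    · have : lval u r = c + 1 := by
        simp only [lval] at hQc ⊢
        linear_combination hQc + u.1 * e1 + u.2 * e2 - hX
      omega
    · have : lval u r = c + 1 := by
        simp only [lval] at hQc ⊢
        linear_combination hQc + u.1 * e1 + u.2 * e2 + hX
      omega
    · have : lval u r = c - 1 := by
        simp only [lval] at hQc ⊢
        linear_combination hQc + u.1 * e1 + u.2 * e2 + hX
      omega

-- ### classification of supporting lines through two given points
lemma bt_pair {α : Finset (ℤ × ℤ)} {u' : ℤ × ℤ} {c' : ℤ} (hsupp : IsSupp α u' c')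
    (b1 t1 : ℤ) (hbl : lval u' (b1, 0) = c') (htl : lval u' (t1, 1) = c') :
    (u' = ((1 : ℤ), b1 - t1) ∧ c' = b1) ∨ (u' = ((-1 : ℤ), t1 - b1) ∧ c' = -b1) := by
  have hw : IsCoprime ((1 : ℤ), b1 - t1).1 ((1 : ℤ), b1 - t1).2 := isCoprime_one_left
  have hd0 : ((t1 - b1, 1) : ℤ × ℤ) ≠ 0 := by
    intro hz; rw [Prod.ext_iff] at hz; simp at hz
  have h1 : lval ((1 : ℤ), b1 - t1) (t1 - b1, 1) = 0 := by simp only [lval]; ring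
  have h2 : lval u' (t1 - b1, 1) = 0 := by
    simp only [lval] at hbl htl ⊢; linear_combination htl - hbl
  rcases perp hw hsupp.1 _ hd0 h1 h2 with rfl | hneg
  · left
    refine ⟨rfl, ?_⟩
    simp only [lval] at hbl; linarith
  · right
    have hu : u' = ((-1 : ℤ), t1 - b1) := by
      rw [hneg]; rw [Prod.ext_iff]; simp
    subst hu
    refine ⟨rfl, ?_⟩
    simp only [lval] at hbl; linarith

lemma horiz_pair {α : Finset (ℤ × ℤ)} {u' : ℤ × ℤ} {c' : ℤ} (hsupp : IsSupp α u' c')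
    (x y k : ℤ) (hne : x ≠ y) (e1 : lval u' (x, k) = c') (e2 : lval u' (y, k) = c') :
    (u' = ((0 : ℤ), 1) ∧ c' = k) ∨ (u' = ((0 : ℤ), -1) ∧ c' = -k) := by
  have hw : IsCoprime ((0 : ℤ), (1 : ℤ)).1 ((0 : ℤ), (1 : ℤ)).2 := by
    exact isCoprime_zero_left.mpr isUnit_one
  have hd0 : ((y - x, 0) : ℤ × ℤ) ≠ 0 := by
    intro hz; rw [Prod.ext_iff] at hz; simp at hz; omega
  have h1 : lval ((0 : ℤ), (1 : ℤ)) (y - x, 0) = 0 := by simp [lval]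
  have h2 : lval u' (y - x, 0) = 0 := by
    simp only [lval] at e1 e2 ⊢; linear_combination e2 - e1
  rcases perp hw hsupp.1 _ hd0 h1 h2 with rfl | hneg
  · left
    refine ⟨rfl, ?_⟩
    simp only [lval] at e1; linarith
  · right
    have hu : u' = ((0 : ℤ), -1) := by rw [hneg]; rw [Prod.ext_iff]; simp
    subst hu
    refine ⟨rfl, ?_⟩
    simp only [lval] at e1; linarith


lemma filter_eq_pair {α : Finset (ℤ × ℤ)} {P : ℤ × ℤ → Prop} [DecidablePred P]
    {q1 q2 : ℤ × ℤ} (hq1 : q1 ∈ α) (hq2 : q2 ∈ α) (hP1 : P q1) (hP2 : P q2)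
    (hothers : ∀ z ∈ α, P z → z = q1 ∨ z = q2) : α.filter P = {q1, q2} := by
  ext z
  simp only [Finset.mem_filter, Finset.mem_insert, Finset.mem_singleton]
  constructor
  · rintro ⟨hz, hPz⟩
    exact hothers z hz hPz
  · rintro (rfl | rfl)
    · exact ⟨hq1, hP1⟩
    · exact ⟨hq2, hP2⟩

lemma flatCase {α : Finset (ℤ × ℤ)} {M : Finset (Finset (ℤ × ℤ))}
    (h : IsMarkedBPolygon α M)
    (H2 : ∀ p ∈ α, p.2 = 0 ∨ p.2 = 1)
    (Hb : α.filter (fun p => p.2 = 0) ∈ M)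
    (Ht : α.filter (fun p => p.2 = 1) ∉ M)
    (Hc : 2 ≤ (α.filter (fun p => p.2 = 1)).card) :
    B2Shape α M ∨
      ∃ xb xB xt : ℤ, xb + 1 < xB ∧
        α = {(xb, 0), (xB, 0), (xt, 1), (xt + 1, 1)} ∧
        M = {{(xb, 0), (xB, 0)}, {(xb, 0), (xt, 1)}, {(xB, 0), (xt + 1, 1)}} := by
  classical
  -- extremes of the bottom
  obtain ⟨ub, cb, _, _, hcardB⟩ := h.2.1 _ Hb
  have hBne : (α.filter (fun p => p.2 = 0)).Nonempty := Finset.card_pos.mp (by omega)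
  have hTne : (α.filter (fun p => p.2 = 1)).Nonempty := Finset.card_pos.mp (by omega)
  obtain ⟨bl, hblB, hblmin⟩ := Finset.exists_min_image _ Prod.fst hBne
  obtain ⟨br, hbrB, hbrmax⟩ := Finset.exists_max_image _ Prod.fst hBne
  obtain ⟨tl, htlB, htlmin⟩ := Finset.exists_min_image _ Prod.fst hTne
  obtain ⟨tr, htrB, htrmax⟩ := Finset.exists_max_image _ Prod.fst hTne
  rw [Finset.mem_filter] at hblB hbrB htlB htrB
  obtain ⟨hblα, hbl2⟩ := hblB
  obtain ⟨hbrα, hbr2⟩ := hbrB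
  obtain ⟨htlα, htl2⟩ := htlB
  obtain ⟨htrα, htr2⟩ := htrB
  have hbl' : bl = (bl.1, 0) := Prod.ext rfl hbl2
  have hbr' : br = (br.1, 0) := Prod.ext rfl hbr2
  have htl' : tl = (tl.1, 1) := Prod.ext rfl htl2
  have htr' : tr = (tr.1, 1) := Prod.ext rfl htr2
  obtain ⟨xb, hxb⟩ : ∃ x : ℤ, bl = (x, 0) := ⟨bl.1, hbl'⟩
  obtain ⟨xB, hxB⟩ : ∃ x : ℤ, br = (x, 0) := ⟨br.1, hbr'⟩
  obtain ⟨xt, hxt⟩ : ∃ x : ℤ, tl = (x, 1) := ⟨tl.1, htl'⟩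
  obtain ⟨xT, hxT⟩ : ∃ x : ℤ, tr = (x, 1) := ⟨tr.1, htr'⟩
  subst hxb hxB hxt hxT
  simp only at hblmin hbrmax htlmin htrmax
  -- strict inequalities between extremes
  have hblt : xb < xB := by
    obtain ⟨P, hP, Q, hQ, hne⟩ :=
      (Finset.one_lt_card (s := α.filter (fun p => p.2 = 0))).mp (by omega)
    have h1 := hblmin P hP
    have h2 := hbrmax P hP
    have h3 := hblmin Q hQ
    have h4 := hbrmax Q hQ
    rw [Finset.mem_filter] at hP hQ
    have : P.1 ≠ Q.1 := by
      intro hPQ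
      exact hne (Prod.ext hPQ (by rw [hP.2, hQ.2]))
    omega
  have htlt : xt < xT := by
    obtain ⟨P, hP, Q, hQ, hne⟩ :=
      (Finset.one_lt_card (s := α.filter (fun p => p.2 = 1))).mp (by omega)
    have h1 := htlmin P hP
    have h2 := htrmax P hP
    have h3 := htlmin Q hQ
    have h4 := htrmax Q hQ
    rw [Finset.mem_filter] at hP hQ
    have : P.1 ≠ Q.1 := by
      intro hPQ
      exact hne (Prod.ext hPQ (by rw [hP.2, hQ.2]))
    omega
  -- the serving analysis for triangles (top-left, top-right, bottom point)
  have serve : ∀ b1 : ℤ, (b1, (0:ℤ)) ∈ α →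
      ((∃ s' ∈ M, IsSupp α ((1:ℤ), b1 - xt) b1 ∧
          s' = α.filter (fun x => lval ((1:ℤ), b1 - xt) x = b1)) ∧ xT = xt + 1) ∨
      ((∃ s' ∈ M, IsSupp α ((-1:ℤ), xT - b1) (-b1) ∧
          s' = α.filter (fun x => lval ((-1:ℤ), xT - b1) x = -b1)) ∧ xT = xt + 1) := by
    intro b1 hbα
    have hnc : NotCollinear (xt, 1) (xT, 1) (b1, 0) := by
      simp only [NotCollinear]
      intro hcon
      simp at hcon
      omega
    obtain ⟨s', hs'M, u', c', hsupp', hfil', hpat⟩ :=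
      h.2.2 (xt, 1) htlα (xT, 1) htrα (b1, 0) hbα hnc
    rcases hpat with ⟨h1, h2, h3⟩ | ⟨h1, h2, h3⟩ | ⟨h1, h2, h3⟩
    · -- both top vertices on the marked line: impossible
      exfalso
      rcases horiz_pair hsupp' xt xT 1 (by omega) h1 h2 with ⟨rfl, rfl⟩ | ⟨rfl, rfl⟩
      · have := hsupp'.2 (b1, 0) hbα
        simp [lval] at this
      · apply Ht
        have : s' = α.filter (fun p => p.2 = 1) := by
          rw [hfil']
          apply Finset.filter_congr
          intro x _
          simp only [lval]
          constructor <;> intro hh <;> omega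
        exact this ▸ hs'M
    · -- bottom point and top-left on the marked line
      rcases bt_pair hsupp' b1 xt h2 h1 with ⟨rfl, rfl⟩ | ⟨rfl, rfl⟩
      · left
        have hxT1 : xT = xt + 1 := by simp only [lval] at h3; omega
        exact ⟨⟨s', hs'M, hsupp', hfil'⟩, hxT1⟩
      · exfalso
        simp only [lval] at h3
        omega
    · -- bottom point and top-right on the marked line
      rcases bt_pair hsupp' b1 xT h2 h1 with ⟨rfl, rfl⟩ | ⟨rfl, rfl⟩
      · exfalso
        simp only [lval] at h3
        omega
      · right
        have hxT1 : xT = xt + 1 := by simp only [lval] at h3; omega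
        exact ⟨⟨s', hs'M, hsupp', hfil'⟩, hxT1⟩
  -- apply to the two bottom extremes
  have hserve_bl := serve xb hblα
  have hserve_br := serve xB hbrα
  have hxT1 : xT = xt + 1 := by
    rcases hserve_bl with ⟨_, hh⟩ | ⟨_, hh⟩ <;> exact hh
  subst hxT1
  obtain ⟨sl, hslM, hsuppl, hfill⟩ : ∃ s' ∈ M, IsSupp α ((1:ℤ), xb - xt) xb ∧
      s' = α.filter (fun x => lval ((1:ℤ), xb - xt) x = xb) := by
    rcases hserve_bl with ⟨hh, _⟩ | ⟨⟨s', hs'M, hsupp', _⟩, _⟩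
    · exact hh
    · exfalso
      have := hsupp'.2 (xB, 0) hbrα
      simp only [lval] at this
      omega
  obtain ⟨sr, hsrM, hsuppr, hfilr⟩ : ∃ s' ∈ M, IsSupp α ((-1:ℤ), xt + 1 - xB) (-xB) ∧
      s' = α.filter (fun x => lval ((-1:ℤ), xt + 1 - xB) x = -xB) := by
    rcases hserve_br with ⟨⟨s', hs'M, hsupp', _⟩, _⟩ | ⟨hh, _⟩
    · exfalso
      have := hsupp'.2 (xb, 0) hblα
      simp only [lval] at this
      omega
    · exact hh
  -- characterize the bottom and top rows
  have hBchar : ∀ b ∈ α, b.2 = 0 → b = ((xb:ℤ), 0) ∨ b = ((xB:ℤ), 0) := by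
    intro b hbα hb2
    have hb' : b = (b.1, 0) := Prod.ext rfl hb2
    rw [hb'] at hbα
    have hmin := hblmin b (Finset.mem_filter.mpr ⟨hb' ▸ hbα, hb2⟩)
    have hmax := hbrmax b (Finset.mem_filter.mpr ⟨hb' ▸ hbα, hb2⟩)
    rcases serve b.1 hbα with ⟨⟨s', hs'M, hsupp', _⟩, _⟩ | ⟨⟨s', hs'M, hsupp', _⟩, _⟩
    · left
      have := hsupp'.2 (xb, 0) hblα
      simp only [lval] at this
      rw [hb']
      have : b.1 = xb := by omega
      rw [this]
    · right
      have := hsupp'.2 (xB, 0) hbrα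
      simp only [lval] at this
      rw [hb']
      have : b.1 = xB := by omega
      rw [this]
  have hTchar : ∀ t ∈ α, t.2 = 1 → t = ((xt:ℤ), 1) ∨ t = (xt + 1, 1) := by
    intro t htα ht2
    have ht' : t = (t.1, 1) := Prod.ext rfl ht2
    have hmin := htlmin t (Finset.mem_filter.mpr ⟨htα, ht2⟩)
    have hmax := htrmax t (Finset.mem_filter.mpr ⟨htα, ht2⟩)
    have : t.1 = xt ∨ t.1 = xt + 1 := by omega
    rcases this with hh | hh <;> [left; right] <;> rw [ht', hh]
  have hα : α = {((xb:ℤ), 0), ((xB:ℤ), 0), ((xt:ℤ), 1), (xt + 1, 1)} := by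
    ext z
    simp only [Finset.mem_insert, Finset.mem_singleton]
    constructor
    · intro hz
      rcases H2 z hz with h2 | h2
      · rcases hBchar z hz h2 with hh | hh <;> tauto
      · rcases hTchar z hz h2 with hh | hh <;> tauto
    · rintro (rfl | rfl | rfl | rfl) <;> assumption
  have hmem : ∀ z ∈ α, z = ((xb:ℤ), 0) ∨ z = ((xB:ℤ), 0) ∨ z = ((xt:ℤ), 1) ∨
      z = (xt + 1, 1) := by
    intro z hz
    rw [hα] at hz
    simpa using hz
  -- compute the three candidate sides as filters
  have hfB0 : α.filter (fun p => p.2 = 0) = {((xb:ℤ), 0), ((xB:ℤ), 0)} :=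
    filter_eq_pair hblα hbrα rfl rfl hBchar
  have hfB1 : α.filter (fun p => p.2 = 1) = {((xt:ℤ), 1), (xt + 1, 1)} :=
    filter_eq_pair htlα htrα rfl rfl hTchar
  have hfL : α.filter (fun x => lval ((1:ℤ), xb - xt) x = xb) =
      {((xb:ℤ), 0), ((xt:ℤ), 1)} := by
    apply filter_eq_pair hblα htlα (by simp [lval]) (by simp [lval])
    intro z hz hPz
    rcases hmem z hz with rfl | rfl | rfl | rfl
    · left; rfl
    · exfalso; simp [lval] at hPz; try omega
    · right; rfl
    · exfalso; simp [lval] at hPz; try omega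
  have hfR : α.filter (fun x => lval ((-1:ℤ), xt + 1 - xB) x = -xB) =
      {((xB:ℤ), 0), (xt + 1, 1)} := by
    apply filter_eq_pair hbrα htrα (by simp [lval]) (by simp [lval]; ring)
    intro z hz hPz
    rcases hmem z hz with rfl | rfl | rfl | rfl
    · exfalso; simp [lval] at hPz; try omega
    · left; rfl
    · exfalso; simp [lval] at hPz; try omega
    · right; rfl
  have hf01 : α.filter (fun p => lval ((0:ℤ), 1) p = 0) = {((xb:ℤ), 0), ((xB:ℤ), 0)} := by
    apply filter_eq_pair hblα hbrα (by simp [lval]) (by simp [lval])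
    intro z hz hPz
    apply hBchar z hz
    simpa [lval] using hPz
  have hslM' : ({((xb:ℤ), 0), ((xt:ℤ), 1)} : Finset (ℤ × ℤ)) ∈ M := by
    rw [← hfL, ← hfill]; exact hslM
  have hsrM' : ({((xB:ℤ), 0), (xt + 1, 1)} : Finset (ℤ × ℤ)) ∈ M := by
    rw [← hfR, ← hfilr]; exact hsrM
  have hbM' : ({((xb:ℤ), 0), ((xB:ℤ), 0)} : Finset (ℤ × ℤ)) ∈ M := by
    rw [← hfB0]; exact Hb
  -- characterize the marked sides
  have hMchar : ∀ s ∈ M, s = {((xb:ℤ), 0), ((xB:ℤ), 0)} ∨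
      s = {((xb:ℤ), 0), ((xt:ℤ), 1)} ∨ s = {((xB:ℤ), 0), (xt + 1, 1)} := by
    intro s hsM
    obtain ⟨us, cs, hsupps, hfils, hcards⟩ := h.2.1 s hsM
    obtain ⟨P, hPs, Q, hQs, hne⟩ := (Finset.one_lt_card (s := s)).mp (by omega)
    rw [hfils, Finset.mem_filter] at hPs hQs
    obtain ⟨hPα, hPl⟩ := hPs
    obtain ⟨hQα, hQl⟩ := hQs
    have hTpkill : us = ((0:ℤ), -1) → cs = -1 → False := by
      rintro rfl rfl
      apply Ht
      have hseq : s = α.filter (fun p => p.2 = 1) := by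
        rw [hfils]
        apply Finset.filter_congr
        intro x _
        simp only [lval]
        constructor <;> intro hh <;> omega
      exact hseq ▸ hsM
    rcases hmem P hPα with rfl | rfl | rfl | rfl <;>
      rcases hmem Q hQα with rfl | rfl | rfl | rfl
    · exact absurd rfl hne
    · -- bottom pair
      rcases horiz_pair hsupps xb xB 0 (by omega) hPl hQl with ⟨rfl, rfl⟩ | ⟨rfl, rfl⟩
      · left; rw [hfils]; exact hf01
      · exfalso; have := hsupps.2 (xt, 1) htlα; simp [lval] at this; try omega
    · -- (xb,0) and (xt,1)
      rcases bt_pair hsupps xb xt hPl hQl with ⟨rfl, rfl⟩ | ⟨rfl, rfl⟩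
      · right; left; rw [hfils]; exact hfL
      · exfalso; have := hsupps.2 (xB, 0) hbrα; simp [lval] at this; try omega
    · -- (xb,0) and (xt+1,1)
      rcases bt_pair hsupps xb (xt + 1) hPl hQl with ⟨rfl, rfl⟩ | ⟨rfl, rfl⟩
      · exfalso; have := hsupps.2 (xt, 1) htlα; simp [lval] at this; try omega
      · exfalso; have := hsupps.2 (xB, 0) hbrα; simp [lval] at this; try omega
    · -- (xB,0) and (xb,0)
      rcases horiz_pair hsupps xB xb 0 (by omega) hPl hQl with ⟨rfl, rfl⟩ | ⟨rfl, rfl⟩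
      · left; rw [hfils]; exact hf01
      · exfalso; have := hsupps.2 (xt, 1) htlα; simp [lval] at this; try omega
    · exact absurd rfl hne
    · -- (xB,0) and (xt,1)
      rcases bt_pair hsupps xB xt hPl hQl with ⟨rfl, rfl⟩ | ⟨rfl, rfl⟩
      · exfalso; have := hsupps.2 (xb, 0) hblα; simp [lval] at this; try omega
      · exfalso; have := hsupps.2 (xt + 1, 1) htrα; simp [lval] at this; try omega
    · -- (xB,0) and (xt+1,1)
      rcases bt_pair hsupps xB (xt + 1) hPl hQl with ⟨rfl, rfl⟩ | ⟨rfl, rfl⟩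
      · exfalso; have := hsupps.2 (xb, 0) hblα; simp [lval] at this; try omega
      · right; right; rw [hfils]
        have : α.filter (fun p => lval ((-1:ℤ), xt + 1 - xB) p = -xB) =
            {((xB:ℤ), 0), (xt + 1, 1)} := hfR
        exact this
    · -- (xt,1) and (xb,0)
      rcases bt_pair hsupps xb xt hQl hPl with ⟨rfl, rfl⟩ | ⟨rfl, rfl⟩
      · right; left; rw [hfils]; exact hfL
      · exfalso; have := hsupps.2 (xB, 0) hbrα; simp [lval] at this; try omega
    · -- (xt,1) and (xB,0)
      rcases bt_pair hsupps xB xt hQl hPl with ⟨rfl, rfl⟩ | ⟨rfl, rfl⟩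
      · exfalso; have := hsupps.2 (xb, 0) hblα; simp [lval] at this; try omega
      · exfalso; have := hsupps.2 (xt + 1, 1) htrα; simp [lval] at this; try omega
    · exact absurd rfl hne
    · -- top pair
      rcases horiz_pair hsupps xt (xt + 1) 1 (by omega) hPl hQl with ⟨rfl, rfl⟩ | ⟨rfl, rfl⟩
      · exfalso; have := hsupps.2 (xb, 0) hblα; simp [lval] at this
      · exact absurd (hTpkill rfl rfl) id
    · -- (xt+1,1) and (xb,0)
      rcases bt_pair hsupps xb (xt + 1) hQl hPl with ⟨rfl, rfl⟩ | ⟨rfl, rfl⟩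
      · exfalso; have := hsupps.2 (xt, 1) htlα; simp [lval] at this; try omega
      · exfalso; have := hsupps.2 (xB, 0) hbrα; simp [lval] at this; try omega
    · -- (xt+1,1) and (xB,0)
      rcases bt_pair hsupps xB (xt + 1) hQl hPl with ⟨rfl, rfl⟩ | ⟨rfl, rfl⟩
      · exfalso; have := hsupps.2 (xb, 0) hblα; simp [lval] at this; try omega
      · right; right; rw [hfils]; exact hfR
    · -- top pair reversed
      rcases horiz_pair hsupps (xt + 1) xt 1 (by omega) hPl hQl with ⟨rfl, rfl⟩ | ⟨rfl, rfl⟩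
      · exfalso; have := hsupps.2 (xb, 0) hblα; simp [lval] at this
      · exact absurd (hTpkill rfl rfl) id
    · exact absurd rfl hne
  have hM : M = {{((xb:ℤ), 0), ((xB:ℤ), 0)}, {((xb:ℤ), 0), ((xt:ℤ), 1)},
      {((xB:ℤ), 0), (xt + 1, 1)}} := by
    ext s
    simp only [Finset.mem_insert, Finset.mem_singleton]
    constructor
    · intro hs; exact hMchar s hs
    · rintro (rfl | rfl | rfl)
      · exact hbM'
      · exact hslM'
      · exact hsrM'
  -- split on the width of the bottom side
  by_cases hab : xB = xb + 1
  · left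
    refine ⟨((1:ℤ), xb - xt), xb, hsuppl, ?_, ?_, ?_, ?_⟩
    · constructor
      · simp only [Prod.fst_neg, Prod.snd_neg]
        exact (isCoprime_one_left).neg_left.neg_right
      · intro p hp
        rw [lval_neg]
        rcases hmem p hp with rfl | rfl | rfl | rfl <;> simp [lval] <;> omega
    · rw [hfL]; exact hslM'
    · have : α.filter (fun x => lval ((1:ℤ), xb - xt) x = xb + 1) =
          {((xB:ℤ), 0), (xt + 1, 1)} := by
        apply filter_eq_pair hbrα htrα (by simp [lval]; omega) (by simp [lval]; ring)
        intro z hz hPz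
        rcases hmem z hz with rfl | rfl | rfl | rfl
        · exfalso; simp [lval] at hPz; try omega
        · left; rfl
        · exfalso; simp [lval] at hPz; try omega
        · right; rfl
      rw [this]; exact hsrM'
    · intro p hp
      rcases hmem p hp with rfl | rfl | rfl | rfl <;> simp [lval] <;> omega
  · right
    exact ⟨xb, xB, xt, by omega, hα, hM⟩


/-- classification of marked B-polygons: up to a lattice-affine
transformation (an affine map with unimodular linear part), a 2-dimensional marked
B-polygon is a B₁-marked polygon, a B₂-marked polygon, or a flat border marked polygon. -/
theorem stmt10 (α : Finset (ℤ × ℤ)) (M : Finset (Finset (ℤ × ℤ)))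
    (h : IsMarkedBPolygon α M) :
    ∃ T : (ℤ × ℤ) → (ℤ × ℤ),
      (∃ a b c d e f : ℤ, (a * d - b * c = 1 ∨ a * d - b * c = -1) ∧
        ∀ p, T p = (a * p.1 + b * p.2 + e, c * p.1 + d * p.2 + f)) ∧
      (B1Shape (α.image T) (M.image (Finset.image T)) ∨
       B2Shape (α.image T) (M.image (Finset.image T)) ∨
       FlatShape (α.image T) (M.image (Finset.image T))) := by
  classical
  have hid : ∀ (N : Finset (Finset (ℤ × ℤ))),
      N.image (Finset.image (fun p : ℤ × ℤ => p)) = N := by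
    intro N
    have hfun : (Finset.image (fun p : ℤ × ℤ => p)) = id :=
      funext fun s => by rw [Finset.image_id']; rfl
    rw [hfun, Finset.image_id]
  have hidT : (∃ a b c d e f : ℤ, (a * d - b * c = 1 ∨ a * d - b * c = -1) ∧
      ∀ p : ℤ × ℤ, (fun p : ℤ × ℤ => p) p =
        (a * p.1 + b * p.2 + e, c * p.1 + d * p.2 + f)) :=
    ⟨1, 0, 0, 1, 0, 0, Or.inl (by norm_num), fun p => by simp⟩
  by_cases hstrip : ∃ s ∈ M, ∃ u c, IsSupp α u c ∧ s = α.filter (fun x => lval u x = c) ∧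
      ∀ p ∈ α, lval u p ≤ c + 1
  · obtain ⟨s0, hs0M, u, c, hsupp, hfil, hstripU⟩ := hstrip
    have levels : ∀ p ∈ α, lval u p = c ∨ lval u p = c + 1 := fun p hp => by
      have h1 := hsupp.2 p hp; have h2 := hstripU p hp; omega
    by_cases hTe : α.filter (fun x => lval u x = c + 1) = ∅
    · exfalso
      obtain ⟨p, hp, q, hq, r, hr, hnc⟩ := h.1
      have hc : ∀ x ∈ α, lval u x = c := by
        intro x hx
        rcases levels x hx with hh | hh
        · exact hh
        · exfalso
          have : x ∈ α.filter (fun x => lval u x = c + 1) := Finset.mem_filter.mpr ⟨hx, hh⟩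
          rw [hTe] at this
          simp at this
      exact coll hsupp.1 (hc p hp) (hc q hq) (hc r hr) hnc
    · have hTpos : 0 < (α.filter (fun x => lval u x = c + 1)).card :=
        Finset.card_pos.mpr (Finset.nonempty_of_ne_empty hTe)
      by_cases hC1 : (α.filter (fun x => lval u x = c + 1)).card = 1
      · -- B₁ shape, with the identity transformation
        obtain ⟨apex, hap⟩ := Finset.card_eq_one.mp hC1
        refine ⟨fun p => p, hidT, Or.inl ?_⟩
        rw [Finset.image_id', hid]
        have hapm : apex ∈ α.filter (fun x => lval u x = c + 1) :=
          hap ▸ Finset.mem_singleton_self apex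
        refine ⟨s0, hs0M, u, c, hsupp, hfil, apex, (Finset.mem_filter.mp hapm).1,
          (Finset.mem_filter.mp hapm).2, ?_⟩
        intro p hp hps
        have hl : lval u p = c + 1 := by
          rcases levels p hp with hh | hh
          · exact absurd (hfil ▸ Finset.mem_filter.mpr ⟨hp, hh⟩) hps
          · exact hh
        have : p ∈ α.filter (fun x => lval u x = c + 1) := Finset.mem_filter.mpr ⟨hp, hl⟩
        rw [hap] at this
        exact Finset.mem_singleton.mp this
      · have hC2 : 2 ≤ (α.filter (fun x => lval u x = c + 1)).card := by omega
        by_cases hTM : α.filter (fun x => lval u x = c + 1) ∈ M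
        · -- B₂ shape, with the identity transformation
          refine ⟨fun p => p, hidT, Or.inr (Or.inl ?_)⟩
          rw [Finset.image_id', hid]
          refine ⟨u, c, hsupp, ⟨?_, ?_⟩, hfil ▸ hs0M, hTM, levels⟩
          · simp only [Prod.fst_neg, Prod.snd_neg]
            exact hsupp.1.neg_left.neg_right
          · intro p hp
            rw [lval_neg]
            have := hstripU p hp
            omega
        · -- transform to a horizontal strip and apply the flat-case analysis
          obtain ⟨a0, b0, hab⟩ := hsupp.1
          have hdet : b0 * u.2 - (-a0) * u.1 = 1 := by linear_combination hab
          have h' := transport (E := 0) (F := -c) hdet h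
          have hkey : ∀ p : ℤ × ℤ, (Tmap b0 (-a0) u.1 u.2 0 (-c) p).2 = lval u p - c := by
            intro p; simp [Tmap, lval]; ring
          have hfb : (α.image (Tmap b0 (-a0) u.1 u.2 0 (-c))).filter (fun p => p.2 = 0) =
              (α.filter (fun x => lval u x = c)).image (Tmap b0 (-a0) u.1 u.2 0 (-c)) := by
            rw [filter_image]
            apply congrArg
            apply Finset.filter_congr
            intro p _
            rw [hkey p]
            constructor <;> intro hh <;> omega
          have hft : (α.image (Tmap b0 (-a0) u.1 u.2 0 (-c))).filter (fun p => p.2 = 1) =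
              (α.filter (fun x => lval u x = c + 1)).image (Tmap b0 (-a0) u.1 u.2 0 (-c)) := by
            rw [filter_image]
            apply congrArg
            apply Finset.filter_congr
            intro p _
            rw [hkey p]
            constructor <;> intro hh <;> omega
          have H2' : ∀ p ∈ α.image (Tmap b0 (-a0) u.1 u.2 0 (-c)), p.2 = 0 ∨ p.2 = 1 := by
            intro q hq
            obtain ⟨p, hp, rfl⟩ := Finset.mem_image.mp hq
            rw [hkey p]
            rcases levels p hp with hh | hh <;> omega
          have Hb' : (α.image (Tmap b0 (-a0) u.1 u.2 0 (-c))).filter (fun p => p.2 = 0) ∈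
              M.image (Finset.image (Tmap b0 (-a0) u.1 u.2 0 (-c))) := by
            rw [hfb, ← hfil]
            exact Finset.mem_image_of_mem _ hs0M
          have Ht' : (α.image (Tmap b0 (-a0) u.1 u.2 0 (-c))).filter (fun p => p.2 = 1) ∉
              M.image (Finset.image (Tmap b0 (-a0) u.1 u.2 0 (-c))) := by
            rw [hft]
            intro hcon
            obtain ⟨s, hs, hseq⟩ := Finset.mem_image.mp hcon
            have := Finset.image_injective (Tmap_inj hdet) hseq
            exact hTM (this ▸ hs)
          have Hc' : 2 ≤ ((α.image (Tmap b0 (-a0) u.1 u.2 0 (-c))).filter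
              (fun p => p.2 = 1)).card := by
            rw [hft, Finset.card_image_of_injective _ (Tmap_inj hdet)]
            exact hC2
          rcases flatCase h' H2' Hb' Ht' Hc' with hB2 | ⟨xb, xB, xt, hlt, hα', hM'⟩
          · exact ⟨Tmap b0 (-a0) u.1 u.2 0 (-c),
              ⟨b0, -a0, u.1, u.2, 0, -c, Or.inl hdet, fun p => rfl⟩, Or.inr (Or.inl hB2)⟩
          · refine ⟨fun p => Tmap 1 (xb - xt) 0 1 (-xb) 0 (Tmap b0 (-a0) u.1 u.2 0 (-c) p),
              ?_, Or.inr (Or.inr ?_)⟩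
            · refine ⟨b0 + (xb - xt) * u.1, -a0 + (xb - xt) * u.2, u.1, u.2,
                (xb - xt) * (-c) + (-xb), -c, Or.inl (by linear_combination hab), ?_⟩
              intro p
              simp only [Tmap, Prod.mk.injEq]
              constructor <;> ring
            · have himg : α.image (fun p => Tmap 1 (xb - xt) 0 1 (-xb) 0
                  (Tmap b0 (-a0) u.1 u.2 0 (-c) p)) =
                  (α.image (Tmap b0 (-a0) u.1 u.2 0 (-c))).image
                    (Tmap 1 (xb - xt) 0 1 (-xb) 0) := by
                rw [Finset.image_image]; rfl
              have hfun : (Finset.image (Tmap 1 (xb - xt) 0 1 (-xb) 0)) ∘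
                  (Finset.image (Tmap b0 (-a0) u.1 u.2 0 (-c))) =
                  Finset.image (fun p => Tmap 1 (xb - xt) 0 1 (-xb) 0
                    (Tmap b0 (-a0) u.1 u.2 0 (-c) p)) :=
                funext fun s => by rw [Function.comp_apply, Finset.image_image]; rfl
              have hMimg : M.image (Finset.image (fun p => Tmap 1 (xb - xt) 0 1 (-xb) 0
                  (Tmap b0 (-a0) u.1 u.2 0 (-c) p))) =
                  (M.image (Finset.image (Tmap b0 (-a0) u.1 u.2 0 (-c)))).image
                    (Finset.image (Tmap 1 (xb - xt) 0 1 (-xb) 0)) := by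
                rw [Finset.image_image, hfun]
              have e1 : Tmap 1 (xb - xt) 0 1 (-xb) 0 ((xb : ℤ), (0 : ℤ)) = (0, 0) := by
                simp only [Tmap, Prod.mk.injEq]; constructor <;> ring
              have e2 : Tmap 1 (xb - xt) 0 1 (-xb) 0 ((xB : ℤ), (0 : ℤ)) = (xB - xb, 0) := by
                simp only [Tmap, Prod.mk.injEq]; constructor <;> ring
              have e3 : Tmap 1 (xb - xt) 0 1 (-xb) 0 ((xt : ℤ), (1 : ℤ)) = (0, 1) := by
                simp only [Tmap, Prod.mk.injEq]; constructor <;> ring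
              have e4 : Tmap 1 (xb - xt) 0 1 (-xb) 0 (xt + 1, (1 : ℤ)) = (1, 1) := by
                simp only [Tmap, Prod.mk.injEq]; constructor <;> ring
              refine ⟨xB - xb, by omega, ?_, ?_⟩
              · rw [himg, hα']
                simp only [Finset.image_insert, Finset.image_singleton, e1, e2, e3, e4]
              · rw [hMimg, hM']
                simp only [Finset.image_insert, Finset.image_singleton, e1, e2, e3, e4]
  · exfalso
    apply no_strip h
    intro s hs u c hsupp hfil
    by_contra hcon
    push_neg at hcon
    exact hstrip ⟨s, hs, u, c, hsupp, hfil, fun p hp => by have := hcon p hp; omega⟩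
end

section
/- In a marked B-polygon \alpha \subset Z^2 that is not a B_1-marked polygon (not a height-1 pyramid over a marked side), there exists a marked side L of the convex hull of \alpha such that every point of \alpha is at lattice distance at most 1 from the line containing L. -/
section Stmt11Aux

private lemma stmt11EX (u u' v y : ℤ × ℤ) (hu : IsCoprime u.1 u.2)
    (hv : v.1 ≠ 0 ∨ v.2 ≠ 0)
    (h1 : u.1 * v.1 + u.2 * v.2 = 0) (h2 : u'.1 * v.1 + u'.2 * v.2 = 0)
    (h3 : u'.1 * y.1 + u'.2 * y.2 = 1) (h4 : 2 ≤ u.1 * y.1 + u.2 * y.2) : False := by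
  obtain ⟨a, b, hab⟩ := hu
  have hc1 : (u.1 * u'.2 - u.2 * u'.1) * v.1 = 0 := by linear_combination u'.2 * h1 - u.2 * h2
  have hc2 : (u.1 * u'.2 - u.2 * u'.1) * v.2 = 0 := by linear_combination u.1 * h2 - u'.1 * h1
  have hcross : u.1 * u'.2 - u.2 * u'.1 = 0 := by
    rcases hv with hv | hv
    · exact (mul_eq_zero.1 hc1).resolve_right hv
    · exact (mul_eq_zero.1 hc2).resolve_right hv
  have ht1 : u'.1 = u.1 * (a * u'.1 + b * u'.2) := by
    linear_combination (-u'.1) * hab - b * hcross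
  have ht2 : u'.2 = u.2 * (a * u'.1 + b * u'.2) := by
    linear_combination (-u'.2) * hab + a * hcross
  have hmul : (a * u'.1 + b * u'.2) * (u.1 * y.1 + u.2 * y.2) = 1 := by
    linear_combination (-y.1) * ht1 - y.2 * ht2 + h3
  have hunit : IsUnit (u.1 * y.1 + u.2 * y.2) :=
    IsUnit.of_mul_eq_one (a * u'.1 + b * u'.2) (by linear_combination hmul)
  rcases Int.isUnit_iff.1 hunit with h | h <;> omega

private lemma stmt11L3 (u u1 v w : ℤ × ℤ) (h1 : IsCoprime u.1 u.2) (h2 : IsCoprime v.1 v.2)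
    (h3 : u.1 * w.1 + u.2 * w.2 = 0) (h4 : u1.1 * w.1 + u1.2 * w.2 = 1)
    (h5 : u1.1 * v.1 + u1.2 * v.2 = 0) (h6 : 2 ≤ u.1 * v.1 + u.2 * v.2) : False := by
  obtain ⟨a, b, hab⟩ := h1
  obtain ⟨a', b', hab'⟩ := h2
  have hid : (u.1 * v.1 + u.2 * v.2)
      = (u.1 * u1.2 - u.2 * u1.1) * (v.1 * w.2 - v.2 * w.1) := by
    linear_combination (-(u.1 * v.1 + u.2 * v.2)) * h4 + (u.1 * w.1 + u.2 * w.2) * h5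
  have hD : (u.1 * u1.2 - u.2 * u1.1) * (w.1 * b - w.2 * a) = -1 := by
    linear_combination (u1.1 * a + u1.2 * b) * h3 - (a * u.1 + b * u.2) * h4 - hab
  have hE : (v.1 * w.2 - v.2 * w.1) * (u1.1 * b' - u1.2 * a') = -1 := by
    linear_combination (a' * w.1 + b' * w.2) * h5 - (a' * v.1 + b' * v.2) * h4 - hab'
  have hmul : (u.1 * v.1 + u.2 * v.2)
      * ((w.1 * b - w.2 * a) * (u1.1 * b' - u1.2 * a')) = 1 := by
    rw [hid]
    linear_combination ((v.1 * w.2 - v.2 * w.1) * (u1.1 * b' - u1.2 * a')) * hD - hE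
  have hunit : IsUnit (u.1 * v.1 + u.2 * v.2) := IsUnit.of_mul_eq_one _ hmul
  rcases Int.isUnit_iff.1 hunit with h | h <;> omega

private lemma stmt11L2 (u : ℤ × ℤ) (c : ℤ) (P Q Z : ℤ × ℤ) (hPQ : P ≠ Q)
    (h1 : lval u P = c) (h2 : lval u Q = c) (h3 : lval u Z ≠ c) :
    NotCollinear P Q Z := by
  intro hcol
  simp only [lval] at h1 h2 h3
  have h12 : u.1 * (Q.1 - P.1) + u.2 * (Q.2 - P.2) = 0 := by linear_combination h2 - h1
  apply h3
  have e1 : (u.1 * Z.1 + u.2 * Z.2 - c) * (Q.1 - P.1) = 0 := by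
    linear_combination (Z.1 - P.1) * h12 + u.2 * hcol + (Q.1 - P.1) * h1
  have e2 : (u.1 * Z.1 + u.2 * Z.2 - c) * (Q.2 - P.2) = 0 := by
    linear_combination (Z.2 - P.2) * h12 - u.1 * hcol + (Q.2 - P.2) * h1
  have hv : Q.1 - P.1 ≠ 0 ∨ Q.2 - P.2 ≠ 0 := by
    by_contra hcon
    push_neg at hcon
    exact hPQ (Prod.ext (by omega) (by omega))
  rcases hv with hv | hv
  · have := (mul_eq_zero.1 e1).resolve_right hv; omega
  · have := (mul_eq_zero.1 e2).resolve_right hv; omega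

private lemma stmt11ne12 {p q r : ℤ × ℤ} (h : NotCollinear p q r) : p ≠ q :=
  fun he => h (by subst he; ring)

private lemma stmt11ne13 {p q r : ℤ × ℤ} (h : NotCollinear p q r) : p ≠ r :=
  fun he => h (by subst he; ring)

private lemma stmt11ne23 {p q r : ℤ × ℤ} (h : NotCollinear p q r) : q ≠ r :=
  fun he => h (by subst he; ring)

private lemma stmt11key (α : Finset (ℤ × ℤ)) (M : Finset (Finset (ℤ × ℤ)))
    (htri : ∀ p ∈ α, ∀ q ∈ α, ∀ r ∈ α, NotCollinear p q r → IsMarkedBTriangle α M p q r)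
    (hneg : ∀ s ∈ M, ∀ u c, IsSupp α u c → s = α.filter (fun x => lval u x = c) →
      ∃ p ∈ α, c + 1 < lval u p)
    (P Q Z : ℤ × ℤ) (hP : P ∈ α) (hZ : Z ∈ α)
    (u : ℤ × ℤ) (c : ℤ) (hsupp : IsSupp α u c)
    (hPc : lval u P = c) (hQc : lval u Q = c) (hZc : c + 2 ≤ lval u Z)
    (u1 : ℤ × ℤ) (c1 : ℤ) (hsupp1 : IsSupp α u1 c1)
    (hs1 : α.filter (fun x => lval u1 x = c1) ∈ M)
    (hP1 : lval u1 P = c1) (hZ1 : lval u1 Z = c1) (hQ1 : lval u1 Q = c1 + 1) : False := by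
  obtain ⟨Z', hZ'α, hZ'⟩ := hneg _ hs1 u1 c1 hsupp1 rfl
  have hPZ : P ≠ Z := by intro h; rw [h] at hPc; omega
  have hncol : NotCollinear P Z Z' := stmt11L2 u1 c1 P Z Z' hPZ hP1 hZ1 (by omega)
  obtain ⟨s2, hs2, u2, c2, hsupp2, hfilt2, hcases⟩ := htri P hP Z hZ Z' hZ'α hncol
  have hvne : Z.1 - P.1 ≠ 0 ∨ Z.2 - P.2 ≠ 0 := by
    by_contra hcon; push_neg at hcon
    exact hPZ (Prod.ext (by omega) (by omega))
  simp only [lval] at hPc hQc hZc hP1 hZ1 hQ1 hZ'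
  have final : IsCoprime (Z.1 - P.1) (Z.2 - P.2) → False := by
    intro hvcop
    exact stmt11L3 u u1 (Z.1 - P.1, Z.2 - P.2) (Q.1 - P.1, Q.2 - P.2) hsupp.1 hvcop
      (by dsimp only; linear_combination hQc - hPc)
      (by dsimp only; linear_combination hQ1 - hP1)
      (by dsimp only; linear_combination hZ1 - hP1) (by dsimp only; linarith)
  rcases hcases with ⟨h1, h2, h3⟩ | ⟨h1, h2, h3⟩ | ⟨h1, h2, h3⟩
  · -- base {P, Z}, apex Z' : impossible since Z' is at height ≥ 2 over the line of s1
    simp only [lval] at h1 h2 h3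
    exact stmt11EX u1 u2 (Z.1 - P.1, Z.2 - P.2) (Z'.1 - P.1, Z'.2 - P.2) hsupp1.1 hvne
      (by dsimp only; linear_combination hZ1 - hP1)
      (by dsimp only; linear_combination h2 - h1)
      (by dsimp only; linear_combination h3 - h1) (by dsimp only; linarith)
  · -- base {P, Z'}, apex Z : then ⟨u2, Z - P⟩ = 1
    simp only [lval] at h1 h2 h3
    exact final ⟨u2.1, u2.2, by linear_combination h3 - h1⟩
  · -- base {Z, Z'}, apex P : then ⟨u2, Z - P⟩ = -1
    simp only [lval] at h1 h2 h3
    exact final ⟨-u2.1, -u2.2, by linear_combination h3 - h1⟩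

private lemma stmt11key0 (α : Finset (ℤ × ℤ)) (M : Finset (Finset (ℤ × ℤ)))
    (htri : ∀ p ∈ α, ∀ q ∈ α, ∀ r ∈ α, NotCollinear p q r → IsMarkedBTriangle α M p q r)
    (hneg : ∀ s ∈ M, ∀ u c, IsSupp α u c → s = α.filter (fun x => lval u x = c) →
      ∃ p ∈ α, c + 1 < lval u p)
    (P Q : ℤ × ℤ) (hP : P ∈ α) (hQ : Q ∈ α) (hPQ : P ≠ Q)
    (u : ℤ × ℤ) (c : ℤ) (hsupp : IsSupp α u c)
    (hsM : α.filter (fun x => lval u x = c) ∈ M)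
    (hPc : lval u P = c) (hQc : lval u Q = c) : False := by
  obtain ⟨Z, hZα, hZgt⟩ := hneg _ hsM u c hsupp rfl
  have hZc : c + 2 ≤ lval u Z := by omega
  have hncol : NotCollinear P Q Z := stmt11L2 u c P Q Z hPQ hPc hQc (by omega)
  obtain ⟨s1, hs1M, u1, c1, hsupp1, hfilt1, hcases⟩ := htri P hP Q hQ Z hZα hncol
  rw [hfilt1] at hs1M
  rcases hcases with ⟨h1, h2, h3⟩ | ⟨h1, h2, h3⟩ | ⟨h1, h2, h3⟩
  · -- base {P, Q}, apex Z : impossible since Z is at height ≥ 2 over the line of s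
    have hvne : Q.1 - P.1 ≠ 0 ∨ Q.2 - P.2 ≠ 0 := by
      by_contra hcon; push_neg at hcon
      exact hPQ (Prod.ext (by omega) (by omega))
    simp only [lval] at hPc hQc hZc h1 h2 h3
    exact stmt11EX u u1 (Q.1 - P.1, Q.2 - P.2) (Z.1 - P.1, Z.2 - P.2) hsupp.1 hvne
      (by dsimp only; linear_combination hQc - hPc)
      (by dsimp only; linear_combination h2 - h1)
      (by dsimp only; linear_combination h3 - h1) (by dsimp only; linarith)
  · exact stmt11key α M htri hneg P Q Z hP hZα u c hsupp hPc hQc hZc u1 c1 hsupp1 hs1M h1 h2 h3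
  · exact stmt11key α M htri hneg Q P Z hQ hZα u c hsupp hQc hPc hZc u1 c1 hsupp1 hs1M h1 h2 h3

end Stmt11Aux

/-- in a marked B-polygon that is not a B₁-marked polygon, there is a marked
side `L` such that every point of the polygon is at lattice distance at most 1 from the
line containing `L`. -/
theorem stmt11 (α : Finset (ℤ × ℤ)) (M : Finset (Finset (ℤ × ℤ)))
    (h : IsMarkedBPolygon α M) (hnotB1 : ¬ B1Shape α M) :
    ∃ s ∈ M, ∃ u c, IsSupp α u c ∧ s = α.filter (fun x => lval u x = c) ∧
      ∀ p ∈ α, lval u p ≤ c + 1 := by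
  obtain ⟨⟨p0, hp0, q0, hq0, r0, hr0, hncol0⟩, hsides, htri⟩ := h
  by_contra hneg
  push_neg at hneg
  obtain ⟨s, hsM, u, c, hsupp, hfilt, hcases⟩ := htri p0 hp0 q0 hq0 r0 hr0 hncol0
  rw [hfilt] at hsM
  rcases hcases with ⟨h1, h2, h3⟩ | ⟨h1, h2, h3⟩ | ⟨h1, h2, h3⟩
  · exact stmt11key0 α M htri hneg p0 q0 hp0 hq0 (stmt11ne12 hncol0) u c hsupp hsM h1 h2
  · exact stmt11key0 α M htri hneg p0 r0 hp0 hr0 (stmt11ne13 hncol0) u c hsupp hsM h1 h2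
  · exact stmt11key0 α M htri hneg q0 r0 hq0 hr0 (stmt11ne23 hncol0) u c hsupp hsM h1 h2
end
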